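/- Let N ≥ 5 be an odd natural number. Let θ ∈ [0, π/2] satisfy cos²θ = cos(π/N)/(1 + cos(π/N)), and for i ∈ {1, …, N} set φᵢ = i·π·(N−1)/N and define vectors in ℝ³: v₀ = (1, 0, 0) and vᵢ = (cos θ, sin θ · sin φᵢ, sin θ · cos φᵢ). Then: (a) each vᵢ (i = 0, 1, …, N) is a unit vector; (b) ⟨vᵢ, vᵢ₊₁⟩ = 0 for all i ∈ {1, …, N}, where v_{N+1} := v₁ (i.e., consecutive vectors around the cycle are orthogonal); (c) ⟨v₀, vᵢ⟩² = cos(π/N)/(1 + cos(π/N)) for every i ∈ {1, …, N}; and consequently (d) Σ_{i=1}^{N} ⟨v₀, vᵢ⟩² = N·cos(π/N)/(1 + cos(π/N)). -/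

import Mathlib

open scoped BigOperators Real

theorem odd_cycle_optimal_strategy
    (N : ℕ) (hN : 5 ≤ N) (hNodd : Odd N)
    (θ : ℝ) (hθ0 : 0 ≤ θ) (hθπ : θ ≤ Real.pi / 2)
    (hθ : Real.cos θ ^ 2 = Real.cos (Real.pi / N) / (1 + Real.cos (Real.pi / N)))
    (φ : ℕ → ℝ) (hφ : ∀ i, φ i = i * Real.pi * ((N : ℝ) - 1) / N)
    (v : ℕ → Fin 3 → ℝ)
    (hv0 : v 0 = ![1, 0, 0])
    (hvi : ∀ i, 1 ≤ i → i ≤ N →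
      v i = ![Real.cos θ, Real.sin θ * Real.sin (φ i), Real.sin θ * Real.cos (φ i)]) :
    (∀ i ≤ N, ∑ k, v i k ^ 2 = 1) ∧
    (∀ i, 1 ≤ i → i ≤ N → ∑ k, v i k * v (if i = N then 1 else i + 1) k = 0) ∧
    (∀ i, 1 ≤ i → i ≤ N →
      (∑ k, v 0 k * v i k) ^ 2 = Real.cos (Real.pi / N) / (1 + Real.cos (Real.pi / N))) ∧
    (∑ i ∈ Finset.Icc 1 N, (∑ k, v 0 k * v i k) ^ 2
      = N * Real.cos (Real.pi / N) / (1 + Real.cos (Real.pi / N))) := by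
  have hπ := Real.pi_pos
  have hN5 : (5:ℝ) ≤ N := by exact_mod_cast hN
  have hNpos : (0:ℝ) < N := by linarith
  have hNne : (N:ℝ) ≠ 0 := ne_of_gt hNpos
  set c := Real.cos (Real.pi / N) with hc_def
  have hc : 0 < c := by
    apply Real.cos_pos_of_mem_Ioo
    constructor
    · have : 0 < Real.pi / N := by positivity
      linarith
    · have h1 : Real.pi / N ≤ Real.pi / 5 := by
        apply div_le_div_of_nonneg_left (le_of_lt hπ) (by norm_num) hN5
      have h2 : Real.pi / 5 < Real.pi / 2 := by
        apply div_lt_div_of_pos_left hπ (by norm_num) (by norm_num)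
      linarith
  have h1c : (0:ℝ) < 1 + c := by linarith
  have h1cne : (1:ℝ) + c ≠ 0 := ne_of_gt h1c
  have hsin2 : Real.sin θ ^ 2 = 1 / (1 + c) := by
    have h := Real.sin_sq_add_cos_sq θ
    rw [hθ] at h
    field_simp at h ⊢
    linarith
  -- key: cos of the angle difference between consecutive vectors is -c
  have hcos_step : ∀ i, 1 ≤ i → i < N → Real.cos (φ i - φ (i+1)) = -c := by
    intro i _ _
    have : φ i - φ (i+1) = -(Real.pi - Real.pi / N) := by
      rw [hφ, hφ]
      push_cast
      field_simp
      ring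
    rw [this, Real.cos_neg, Real.cos_pi_sub]
  have hcos_wrap : Real.cos (φ N - φ 1) = -c := by
    obtain ⟨m, hm⟩ := hNodd
    have hm2 : 2 ≤ m := by omega
    have : φ N - φ 1 = (Real.pi / N + Real.pi) + ((m - 1 : ℤ) : ℝ) * (2 * Real.pi) := by
      rw [hφ, hφ]
      have hmN : (N:ℝ) = 2 * m + 1 := by exact_mod_cast congrArg (Nat.cast (R := ℝ)) hm
      push_cast
      rw [hmN]
      have : (2:ℝ) * m + 1 ≠ 0 := by positivity
      field_simp
      ring
    rw [this, Real.cos_add_int_mul_two_pi, Real.cos_add_pi]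
  -- orthogonality of consecutive vectors, given cos of diff = -c
  have hval : c / (1 + c) + (1 / (1 + c)) * (-c) = 0 := by
    field_simp
    ring
  refine ⟨?_, ?_, ?_, ?_⟩
  · intro i hiN
    rcases Nat.eq_zero_or_pos i with h0 | h1
    · subst h0; rw [hv0]; simp [Fin.sum_univ_three]
    · rw [hvi i h1 hiN]
      simp only [Fin.sum_univ_three, Matrix.cons_val_zero, Matrix.cons_val_one,
        Matrix.head_cons, Matrix.cons_val_two, Matrix.tail_cons]
      have hs := Real.sin_sq_add_cos_sq (φ i)
      have ht := Real.sin_sq_add_cos_sq θ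
      nlinarith [hs, ht]
  · intro i h1 hiN
    by_cases hiNeq : i = N
    · subst hiNeq
      rw [if_pos rfl, hvi i h1 le_rfl, hvi 1 le_rfl (by omega)]
      simp only [Fin.sum_univ_three, Matrix.cons_val_zero, Matrix.cons_val_one,
        Matrix.head_cons, Matrix.cons_val_two, Matrix.tail_cons]
      have hcs : Real.cos (φ i - φ 1) =
          Real.cos (φ i) * Real.cos (φ 1) + Real.sin (φ i) * Real.sin (φ 1) :=
        Real.cos_sub _ _
      rw [hcos_wrap] at hcs
      nlinarith [hθ, hsin2, hcs, hval]
    · have hlt : i < N := lt_of_le_of_ne hiN hiNeq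
      simp only [if_neg hiNeq]
      rw [hvi i h1 hiN, hvi (i+1) (by omega) (by omega)]
      simp only [Fin.sum_univ_three, Matrix.cons_val_zero, Matrix.cons_val_one,
        Matrix.head_cons, Matrix.cons_val_two, Matrix.tail_cons]
      have hcs : Real.cos (φ i - φ (i+1)) =
          Real.cos (φ i) * Real.cos (φ (i+1)) + Real.sin (φ i) * Real.sin (φ (i+1)) :=
        Real.cos_sub _ _
      rw [hcos_step i h1 hlt] at hcs
      nlinarith [hθ, hsin2, hcs, hval]
  · intro i h1 hiN
    rw [hv0, hvi i h1 hiN]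
    simp only [Fin.sum_univ_three, Matrix.cons_val_zero, Matrix.cons_val_one,
      Matrix.head_cons, Matrix.cons_val_two, Matrix.tail_cons]
    rw [show (1:ℝ) * Real.cos θ + 0 * (Real.sin θ * Real.sin (φ i))
        + 0 * (Real.sin θ * Real.cos (φ i)) = Real.cos θ by ring]
    exact hθ
  · have heach : ∀ i ∈ Finset.Icc 1 N, (∑ k, v 0 k * v i k) ^ 2 = c / (1 + c) := by
      intro i hi
      rw [Finset.mem_Icc] at hi
      rw [hv0, hvi i hi.1 hi.2]
      simp only [Fin.sum_univ_three, Matrix.cons_val_zero, Matrix.cons_val_one,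
        Matrix.head_cons, Matrix.cons_val_two, Matrix.tail_cons]
      rw [show (1:ℝ) * Real.cos θ + 0 * (Real.sin θ * Real.sin (φ i))
          + 0 * (Real.sin θ * Real.cos (φ i)) = Real.cos θ by ring]
      exact hθ
    rw [Finset.sum_congr rfl heach, Finset.sum_const, Nat.card_Icc]
    simp only [Nat.add_sub_cancel, nsmul_eq_mul]
    ring
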